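/- Let n = 8, ζ = exp(2πi/8), q = 1 + ζ + ζ² + ζ³, and I = qR. Then: (i) card(R/I) = 8; (ii) every ideal J of R with card(R/J) = 8 equals I; (iii) conj(q) ∈ I, so the colouring induced by I is perfect; (iv) 2 ∈ I; (v) 1 − ζ² ∉ I; (vi) ζ + ζ³ ∉ I. Consequently, an isometry g of the complex plane with g(R) = R satisfies g(x) − x ∈ I for all x ∈ R if and only if there exists t ∈ I with g(z) = z + t for all z or g(z) = −z + t for all z (K = T_{(q)} ⋊ C₂). -/

import Mathlib

open Complex

/-- The primitive `n`-th root of unity `ζ = exp(2πi/n)`. -/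
noncomputable def zeta (n : ℕ) : ℂ := Complex.exp (2 * Real.pi * Complex.I / n)

/-- The ring of cyclotomic integers `M_n = ℤ[ζ_n]`, as a subring of `ℂ`. -/
noncomputable def Rn (n : ℕ) : Subring ℂ := Subring.closure {zeta n}

/-- `ζ_n` as an element of `M_n`. -/
noncomputable def zetaR (n : ℕ) : ↥(Rn n) := ⟨zeta n, Subring.subset_closure rfl⟩

/-- `z ∈ ℂ` lies in the ideal `I` of `Rn n` (viewed inside `ℂ`). -/
def InIdeal (n : ℕ) (I : Ideal ↥(Rn n)) (z : ℂ) : Prop :=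
  ∃ w : ↥(Rn n), w ∈ I ∧ (w : ℂ) = z

/-- An isometry of the complex plane: `z ↦ a z + b` or `z ↦ a conj z + b` with `|a| = 1`. -/
def IsIsometry (g : ℂ → ℂ) : Prop :=
  ∃ a b : ℂ, ‖a‖ = 1 ∧
    ((∀ z, g z = a * z + b) ∨ (∀ z, g z = a * (starRingEnd ℂ) z + b))

/-- An orientation-preserving isometry of the complex plane: `z ↦ a z + b` with `|a| = 1`. -/
def IsOPIsometry (g : ℂ → ℂ) : Prop :=
  ∃ a b : ℂ, ‖a‖ = 1 ∧ ∀ z, g z = a * z + b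

/-- `g` is a colour symmetry of the colouring of `Rn n` induced by the ideal `I`. -/
def IsColourSym (n : ℕ) (I : Ideal ↥(Rn n)) (g : ℂ → ℂ) : Prop :=
  ∀ x y : ℂ, x ∈ Rn n → y ∈ Rn n → (InIdeal n I (x - y) ↔ InIdeal n I (g x - g y))

/-- The colouring induced by `I` is perfect. -/
def IsPerfectColouring (n : ℕ) (I : Ideal ↥(Rn n)) : Prop :=
  ∀ g : ℂ → ℂ, IsIsometry g → g '' (Rn n : Set ℂ) = (Rn n : Set ℂ) → IsColourSym n I g

/-- The colouring induced by `I` is chirally perfect. -/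
def IsChirallyPerfectColouring (n : ℕ) (I : Ideal ↥(Rn n)) : Prop :=
  ∀ g : ℂ → ℂ, IsOPIsometry g → g '' (Rn n : Set ℂ) = (Rn n : Set ℂ) → IsColourSym n I g

lemma zeta8 : zeta 8 = Complex.exp (Real.pi * Complex.I / 4) := by
  unfold zeta; norm_num; ring_nf

lemma zeta8_pow4 : zeta 8 ^ 4 = -1 := by
  rw [zeta8, ← Complex.exp_nat_mul]
  rw [show (4:ℕ) * (Real.pi * Complex.I / 4) = Real.pi * Complex.I by push_cast; ring]
  exact Complex.exp_pi_mul_I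

lemma zeta8_eq : zeta 8 = (Real.sqrt 2 / 2 : ℝ) + (Real.sqrt 2 / 2 : ℝ) * Complex.I := by
  rw [zeta8]
  rw [show Real.pi * Complex.I / 4 = (Real.pi/4 : ℝ) * Complex.I by push_cast; ring]
  rw [Complex.exp_mul_I, ← Complex.ofReal_cos, ← Complex.ofReal_sin]
  norm_num [Real.cos_pi_div_four, Real.sin_pi_div_four]

lemma key (a b c d : ℝ) : ((a:ℂ) + b*zeta 8 + c*zeta 8^2 + d*zeta 8^3)
    = ((a + (Real.sqrt 2/2)*(b-d) : ℝ) : ℂ) + ((c + (Real.sqrt 2/2)*(b+d) : ℝ):ℂ) * Complex.I := by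
  have hs : ((Real.sqrt 2 : ℝ):ℂ)^2 = 2 := by
    norm_cast; exact Real.sq_sqrt (by norm_num)
  rw [zeta8_eq]
  push_cast
  set S : ℂ := ((Real.sqrt 2 : ℝ):ℂ)
  linear_combination (((c:ℂ)/2)*Complex.I + ((d:ℂ)/4)*S*Complex.I + ((d:ℂ)/4)*S*Complex.I^2) * hs
    + (((d:ℂ)/2)*S) * Complex.I_sq
    + (((c:ℂ)/4)*S^2 + ((d:ℂ)/8)*S^3*(1+Complex.I)) * Complex.I_sq

lemma re_coords (a b c d : ℤ) :
    ((a:ℂ) + b*zeta 8 + c*zeta 8^2 + d*zeta 8^3).re = a + (Real.sqrt 2/2)*(b-d) := by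
  have k := key (a:ℝ) b c d
  push_cast at k
  rw [k]; simp

lemma im_coords (a b c d : ℤ) :
    ((a:ℂ) + b*zeta 8 + c*zeta 8^2 + d*zeta 8^3).im = c + (Real.sqrt 2/2)*(b+d) := by
  have k := key (a:ℝ) b c d
  push_cast at k
  rw [k]; simp

lemma irr_helper (m n : ℤ) (h : (n:ℝ) + (Real.sqrt 2/2)*m = 0) : m = 0 ∧ n = 0 := by
  rcases eq_or_ne m 0 with hm | hm
  · subst hm; simp at h; exact ⟨rfl, by exact_mod_cast h⟩
  · exfalso
    apply irrational_sqrt_two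
    refine ⟨(-2*n/m : ℚ), ?_⟩
    have hm' : (m:ℝ) ≠ 0 := Int.cast_ne_zero.mpr hm
    push_cast
    field_simp
    nlinarith [h]

lemma coords_zero (a b c d : ℤ) (h : (a:ℂ) + b*zeta 8 + c*zeta 8^2 + d*zeta 8^3 = 0) :
    a = 0 ∧ b = 0 ∧ c = 0 ∧ d = 0 := by
  have h1 : (a:ℝ) + (Real.sqrt 2/2)*(b-d) = 0 := by
    rw [← re_coords a b c d, h]; simp
  have h2 : (c:ℝ) + (Real.sqrt 2/2)*(b+d) = 0 := by
    rw [← im_coords a b c d, h]; simp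
  have e1 := irr_helper (b - d) a (by push_cast; linarith)
  have e2 := irr_helper (b + d) c (by push_cast; linarith)
  omega

lemma coords_unique {a b c d a' b' c' d' : ℤ}
    (h : (a:ℂ) + b*zeta 8 + c*zeta 8^2 + d*zeta 8^3
       = (a':ℂ) + b'*zeta 8 + c'*zeta 8^2 + d'*zeta 8^3) :
    a = a' ∧ b = b' ∧ c = c' ∧ d = d' := by
  have := coords_zero (a - a') (b - b') (c - c') (d - d') (by push_cast; linear_combination h)
  omega

lemma mul_coords (a b c d e f g h : ℂ) :
    (a + b*zeta 8 + c*zeta 8^2 + d*zeta 8^3) * (e + f*zeta 8 + g*zeta 8^2 + h*zeta 8^3)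
    = (a*e - b*h - c*g - d*f) + (a*f + b*e - c*h - d*g)*zeta 8
      + (a*g + b*f + c*e - d*h)*zeta 8^2 + (a*h + b*g + c*f + d*e)*zeta 8^3 := by
  linear_combination ((b*h + c*g + d*f) + (c*h + d*g)*zeta 8 + d*h*zeta 8^2) * zeta8_pow4

def coordSet : Subring ℂ where
  carrier := {z | ∃ a b c d : ℤ, z = a + b*zeta 8 + c*zeta 8^2 + d*zeta 8^3}
  zero_mem' := ⟨0,0,0,0, by norm_num⟩
  one_mem' := ⟨1,0,0,0, by norm_num⟩
  add_mem' := by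
    rintro x y ⟨a,b,c,d, rfl⟩ ⟨e,f,g,h, rfl⟩
    exact ⟨a+e, b+f, c+g, d+h, by push_cast; ring⟩
  neg_mem' := by
    rintro x ⟨a,b,c,d, rfl⟩
    exact ⟨-a,-b,-c,-d, by push_cast; ring⟩
  mul_mem' := by
    rintro x y ⟨a,b,c,d, rfl⟩ ⟨e,f,g,h, rfl⟩
    refine ⟨a*e - b*h - c*g - d*f, a*f + b*e - c*h - d*g,
      a*g + b*f + c*e - d*h, a*h + b*g + c*f + d*e, ?_⟩
    push_cast
    exact mul_coords a b c d e f g h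

lemma mem_Rn8_iff (z : ℂ) :
    z ∈ Rn 8 ↔ ∃ a b c d : ℤ, z = a + b*zeta 8 + c*zeta 8^2 + d*zeta 8^3 := by
  constructor
  · intro hz
    have : Rn 8 ≤ coordSet := by
      rw [Rn, Subring.closure_le]
      rintro x rfl
      exact ⟨0,1,0,0, by norm_num⟩
    exact this hz
  · rintro ⟨a,b,c,d, rfl⟩
    have hz : zeta 8 ∈ Rn 8 := Subring.subset_closure rfl
    refine Subring.add_mem _ (Subring.add_mem _ (Subring.add_mem _ ?_ ?_) ?_) ?_
    · exact intCast_mem (Rn 8) a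
    · exact Subring.mul_mem _ (intCast_mem (Rn 8) b) hz
    · exact Subring.mul_mem _ (intCast_mem (Rn 8) c) (Subring.pow_mem _ hz 2)
    · exact Subring.mul_mem _ (intCast_mem (Rn 8) d) (Subring.pow_mem _ hz 3)

noncomputable def ofC (a b c d : ℤ) : ↥(Rn 8) :=
  (a : ↥(Rn 8)) + (b : ↥(Rn 8)) * zetaR 8 + (c : ↥(Rn 8)) * zetaR 8 ^ 2
    + (d : ↥(Rn 8)) * zetaR 8 ^ 3

@[simp] lemma zetaR_coe : ((zetaR 8 : ↥(Rn 8)) : ℂ) = zeta 8 := rfl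

lemma ofC_coe (a b c d : ℤ) :
    ((ofC a b c d : ↥(Rn 8)) : ℂ) = a + b*zeta 8 + c*zeta 8^2 + d*zeta 8^3 := by
  simp [ofC]
section
variable (q : ↥(Rn 8)) (hq : q = 1 + zetaR 8 + zetaR 8 ^ 2 + zetaR 8 ^ 3)
  (I : Ideal ↥(Rn 8)) (hI : I = Ideal.span {q})

include hq in
lemma q_coe : (q : ℂ) = 1 + zeta 8 + zeta 8^2 + zeta 8^3 := by
  rw [hq]; push_cast; simp

include hq hI in
lemma mem_I_iff (w : ↥(Rn 8)) :
    w ∈ I ↔ ∃ a b c d : ℤ, (w:ℂ) = a + b*zeta 8 + c*zeta 8^2 + d*zeta 8^3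
      ∧ (2 ∣ b - a) ∧ (2 ∣ c - b) ∧ (2 ∣ d - c) := by
  subst hI
  rw [Ideal.mem_span_singleton']
  constructor
  · rintro ⟨v, rfl⟩
    obtain ⟨e,f,g,h, hv⟩ := (mem_Rn8_iff (v:ℂ)).mp v.2
    refine ⟨e-f-g-h, e+f-g-h, e+f+g-h, e+f+g+h, ?_, ?_, ?_, ?_⟩
    · push_cast
      rw [hv, q_coe q hq]
      linear_combination ((f:ℂ)+g+h + ((g:ℂ)+h)*zeta 8 + (h:ℂ)*zeta 8^2) * zeta8_pow4
    all_goals omega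
  · rintro ⟨a,b,c,d, hw, ⟨k1, hk1⟩, ⟨k2, hk2⟩, ⟨k3, hk3⟩⟩
    refine ⟨ofC (a + k1 + k2 + k3) k1 k2 k3, ?_⟩
    apply Subtype.ext
    push_cast
    rw [ofC_coe, q_coe q hq, hw]
    have H1 : (b:ℂ) - a = 2*k1 := by exact_mod_cast hk1
    have H2 : (c:ℂ) - b = 2*k2 := by exact_mod_cast hk2
    have H3 : (d:ℂ) - c = 2*k3 := by exact_mod_cast hk3
    push_cast
    linear_combination ((k1:ℂ)+k2+k3 + ((k2:ℂ)+k3)*zeta 8 + (k3:ℂ)*zeta 8^2) * zeta8_pow4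
      - (zeta 8 + zeta 8^2 + zeta 8^3) * H1
      - (zeta 8^2 + zeta 8^3) * H2 - (zeta 8^3) * H3

include hq hI in
lemma inIdeal_iff (z : ℂ) :
    InIdeal 8 I z ↔ ∃ a b c d : ℤ, z = a + b*zeta 8 + c*zeta 8^2 + d*zeta 8^3
      ∧ (2 ∣ b - a) ∧ (2 ∣ c - b) ∧ (2 ∣ d - c) := by
  constructor
  · rintro ⟨w, hw, rfl⟩
    exact (mem_I_iff q hq I hI w).mp hw
  · rintro ⟨a,b,c,d, rfl, h1, h2, h3⟩
    have hz : ((a:ℂ) + b*zeta 8 + c*zeta 8^2 + d*zeta 8^3) ∈ Rn 8 :=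
      (mem_Rn8_iff _).mpr ⟨a,b,c,d, rfl⟩
    exact ⟨⟨_, hz⟩, (mem_I_iff q hq I hI _).mpr ⟨a,b,c,d, rfl, h1, h2, h3⟩, rfl⟩

end
lemma conj_zeta : (starRingEnd ℂ) (zeta 8) = -zeta 8^3 := by
  have hs : ((Real.sqrt 2 : ℝ):ℂ)^2 = 2 := by
    norm_cast; exact Real.sq_sqrt (by norm_num)
  rw [zeta8_eq]
  simp only [map_add, map_mul, Complex.conj_ofReal, Complex.conj_I]
  push_cast
  set S : ℂ := ((Real.sqrt 2 : ℝ):ℂ)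
  linear_combination ((S/8)*(1+3*Complex.I+3*Complex.I^2+Complex.I^3)) * hs
    + (3*S/4 + S*Complex.I/4) * Complex.I_sq

lemma conj_coords (a b c d : ℤ) :
    (starRingEnd ℂ) ((a:ℂ) + b*zeta 8 + c*zeta 8^2 + d*zeta 8^3)
      = (a:ℂ) + (-d:ℤ)*zeta 8 + (-c:ℤ)*zeta 8^2 + (-b:ℤ)*zeta 8^3 := by
  simp only [map_add, map_mul, map_pow, conj_zeta, map_intCast]
  push_cast
  linear_combination ((c:ℂ)*zeta 8^2 - d*zeta 8*(zeta 8^4 - 1)) * zeta8_pow4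

lemma conj_mem {z : ℂ} (hz : z ∈ Rn 8) : (starRingEnd ℂ) z ∈ Rn 8 := by
  obtain ⟨a,b,c,d, rfl⟩ := (mem_Rn8_iff z).mp hz
  rw [conj_coords]
  exact (mem_Rn8_iff _).mpr ⟨a,-d,-c,-b, rfl⟩

section
variable (q : ↥(Rn 8)) (hq : q = 1 + zetaR 8 + zetaR 8 ^ 2 + zetaR 8 ^ 3)
  (I : Ideal ↥(Rn 8)) (hI : I = Ideal.span {q})

include hq hI
set_option linter.unusedSectionVars false

lemma inIdeal_sub {z z' : ℂ} (h : InIdeal 8 I z) (h' : InIdeal 8 I z') :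
    InIdeal 8 I (z - z') := by
  obtain ⟨w, hw, rfl⟩ := h
  obtain ⟨w', hw', rfl⟩ := h'
  exact ⟨w - w', I.sub_mem hw hw', by push_cast; ring⟩

lemma inIdeal_mul {a z : ℂ} (ha : a ∈ Rn 8) (h : InIdeal 8 I z) :
    InIdeal 8 I (a * z) := by
  obtain ⟨w, hw, rfl⟩ := h
  exact ⟨⟨a, ha⟩ * w, I.mul_mem_left _ hw, by push_cast; ring⟩

lemma inIdeal_mul_iff {a z : ℂ} (ha : a ∈ Rn 8) (habs : ‖a‖ = 1) :
    InIdeal 8 I z ↔ InIdeal 8 I (a * z) := by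
  constructor
  · exact inIdeal_mul q hq I hI ha
  · intro h
    have h2 := inIdeal_mul q hq I hI (conj_mem ha) h
    have habs1 : (starRingEnd ℂ) a * a = 1 := by
      rw [mul_comm, Complex.mul_conj]
      norm_cast
      rw [Complex.normSq_eq_norm_sq, habs]
      norm_num
    rwa [← mul_assoc, habs1, one_mul] at h2

lemma inIdeal_conj {z : ℂ} (h : InIdeal 8 I z) : InIdeal 8 I ((starRingEnd ℂ) z) := by
  rw [inIdeal_iff q hq I hI] at h ⊢
  obtain ⟨a,b,c,d, rfl, h1, h2, h3⟩ := h
  rw [conj_coords]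
  exact ⟨a,-d,-c,-b, rfl, by omega, by omega, by omega⟩

lemma inIdeal_conj_iff (z : ℂ) :
    InIdeal 8 I z ↔ InIdeal 8 I ((starRingEnd ℂ) z) := by
  refine ⟨inIdeal_conj q hq I hI, fun h => ?_⟩
  have := inIdeal_conj q hq I hI h
  rwa [Complex.conj_conj] at this

lemma two_mem : (2 : ↥(Rn 8)) ∈ I := by
  rw [mem_I_iff q hq I hI]
  exact ⟨2,0,0,0, by push_cast; ring_nf; norm_cast, by omega, by omega, by omega⟩

lemma conjq_mem : InIdeal 8 I ((starRingEnd ℂ) (q : ℂ)) := by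
  rw [inIdeal_iff q hq I hI]
  rw [q_coe q hq, show (1:ℂ) + zeta 8 + zeta 8^2 + zeta 8^3
    = (1:ℤ) + (1:ℤ)*zeta 8 + (1:ℤ)*zeta 8^2 + (1:ℤ)*zeta 8^3 by push_cast; ring, conj_coords]
  exact ⟨1,-1,-1,-1, rfl, by omega, by omega, by omega⟩

lemma not_mem_v : (1 - zetaR 8 ^ 2) ∉ I := by
  rw [mem_I_iff q hq I hI]
  rintro ⟨a,b,c,d, hco, h1, h2, h3⟩
  have : ((1 - zetaR 8^2 : ↥(Rn 8)):ℂ)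
      = (1:ℤ) + (0:ℤ)*zeta 8 + (-1:ℤ)*zeta 8^2 + (0:ℤ)*zeta 8^3 := by
    push_cast [zetaR_coe]; ring
  rw [this] at hco
  obtain ⟨e1, e2, e3, e4⟩ := coords_unique hco.symm
  omega

lemma not_mem_vi : (zetaR 8 + zetaR 8 ^ 3) ∉ I := by
  rw [mem_I_iff q hq I hI]
  rintro ⟨a,b,c,d, hco, h1, h2, h3⟩
  have : ((zetaR 8 + zetaR 8^3 : ↥(Rn 8)):ℂ)
      = (0:ℤ) + (1:ℤ)*zeta 8 + (0:ℤ)*zeta 8^2 + (1:ℤ)*zeta 8^3 := by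
    push_cast [zetaR_coe]; ring
  rw [this] at hco
  obtain ⟨e1, e2, e3, e4⟩ := coords_unique hco.symm
  omega

end
lemma abs_one_classify {a : ℂ} (ha : a ∈ Rn 8) (habs : ‖a‖ = 1) :
    a = 1 ∨ a = -1 ∨ a = zeta 8 ∨ a = -zeta 8 ∨ a = zeta 8^2 ∨ a = -zeta 8^2
      ∨ a = zeta 8^3 ∨ a = -zeta 8^3 := by
  obtain ⟨α,β,γ,δ, hco⟩ := (mem_Rn8_iff a).mp ha
  have hs2 : (Real.sqrt 2 / 2)^2 = 1/2 := by
    rw [div_pow, Real.sq_sqrt] <;> norm_num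
  have hns : Complex.normSq a = 1 := by
    have := Complex.sq_norm a
    rw [habs] at this
    linarith [this]
  have heq : ((α:ℝ) + (Real.sqrt 2/2)*(β-δ))^2 + ((γ:ℝ) + (Real.sqrt 2/2)*(β+δ))^2 = 1 := by
    rw [← re_coords α β γ δ, ← im_coords α β γ δ, ← hco]
    have h2 : a.re*a.re + a.im*a.im = 1 := by rw [← Complex.normSq_apply]; exact hns
    linear_combination h2
  have hnm : ((α^2+β^2+γ^2+δ^2-1 : ℤ):ℝ)
      + (Real.sqrt 2/2)*((2*(α*β - α*δ + γ*β + γ*δ) : ℤ):ℝ) = 0 := by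
    push_cast
    linear_combination heq - (2*(β:ℝ)^2+2*(δ:ℝ)^2)*hs2
  obtain ⟨hm0, hn0⟩ := irr_helper _ _ hnm
  have hn : α^2 + β^2 + γ^2 + δ^2 = 1 := by omega
  have b1 : -1 ≤ α := by nlinarith [sq_nonneg β, sq_nonneg γ, sq_nonneg δ, sq_nonneg (α+1)]
  have b2 : α ≤ 1 := by nlinarith [sq_nonneg β, sq_nonneg γ, sq_nonneg δ, sq_nonneg (α-1)]
  have b3 : -1 ≤ β := by nlinarith [sq_nonneg α, sq_nonneg γ, sq_nonneg δ, sq_nonneg (β+1)]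
  have b4 : β ≤ 1 := by nlinarith [sq_nonneg α, sq_nonneg γ, sq_nonneg δ, sq_nonneg (β-1)]
  have b5 : -1 ≤ γ := by nlinarith [sq_nonneg α, sq_nonneg β, sq_nonneg δ, sq_nonneg (γ+1)]
  have b6 : γ ≤ 1 := by nlinarith [sq_nonneg α, sq_nonneg β, sq_nonneg δ, sq_nonneg (γ-1)]
  have b7 : -1 ≤ δ := by nlinarith [sq_nonneg α, sq_nonneg β, sq_nonneg γ, sq_nonneg (δ+1)]
  have b8 : δ ≤ 1 := by nlinarith [sq_nonneg α, sq_nonneg β, sq_nonneg γ, sq_nonneg (δ-1)]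
  clear hnm hm0 hn0 heq hns habs ha hs2
  interval_cases α <;> interval_cases β <;> interval_cases γ <;> interval_cases δ <;>
    norm_num at hn <;> norm_num at hco ⊢ <;> tauto
lemma zmod2_val_sub (x : ℤ) : (2:ℤ) ∣ (((x : ZMod 2).val : ℤ) - x) := by
  have := (ZMod.intCast_zmod_eq_zero_iff_dvd (((x : ZMod 2).val : ℤ) - x) 2).mp
  push_cast at this
  exact this (by simp [ZMod.natCast_val, ZMod.intCast_cast])

section
variable (q : ↥(Rn 8)) (hq : q = 1 + zetaR 8 + zetaR 8 ^ 2 + zetaR 8 ^ 3)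
  (I : Ideal ↥(Rn 8)) (hI : I = Ideal.span {q})
include hq hI
set_option linter.unusedSectionVars false

lemma card_RI : Nat.card (↥(Rn 8) ⧸ I) = 8 := by
  classical
  set χ : ZMod 2 × ZMod 2 × ZMod 2 → ↥(Rn 8) ⧸ I :=
    fun p => Ideal.Quotient.mk I (ofC p.1.val p.2.1.val p.2.2.val 0) with hχ
  have hsurj : Function.Surjective χ := by
    intro w
    obtain ⟨v, rfl⟩ := Ideal.Quotient.mk_surjective w
    obtain ⟨a,b,c,d, hv⟩ := (mem_Rn8_iff (v:ℂ)).mp v.2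
    refine ⟨⟨((a-d : ℤ) : ZMod 2), ((b-d:ℤ):ZMod 2), ((c-d:ℤ):ZMod 2)⟩, ?_⟩
    rw [hχ, Ideal.Quotient.mk_eq_mk_iff_sub_mem, mem_I_iff q hq I hI]
    refine ⟨((((a-d : ℤ) : ZMod 2)).val : ℤ) - a, ((((b-d : ℤ) : ZMod 2)).val : ℤ) - b,
      ((((c-d : ℤ) : ZMod 2)).val : ℤ) - c, -d, ?_, ?_, ?_, ?_⟩
    · push_cast
      rw [ofC_coe, hv]
      push_cast
      ring
    · have t1 := zmod2_val_sub (a-d)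
      have t2 := zmod2_val_sub (b-d)
      omega
    · have t2 := zmod2_val_sub (b-d)
      have t3 := zmod2_val_sub (c-d)
      omega
    · have t3 := zmod2_val_sub (c-d)
      omega
  have hinj : Function.Injective χ := by
    intro p p' h
    rw [hχ, Ideal.Quotient.mk_eq_mk_iff_sub_mem, mem_I_iff q hq I hI] at h
    obtain ⟨a,b,c,d, hco, h1,h2,h3⟩ := h
    have hex : ((ofC p.1.val p.2.1.val p.2.2.val 0 - ofC p'.1.val p'.2.1.val p'.2.2.val 0
        : ↥(Rn 8)) : ℂ)
        = ((p.1.val : ℤ) - (p'.1.val : ℤ) : ℤ) + ((p.2.1.val : ℤ) - (p'.2.1.val : ℤ) : ℤ)*zeta 8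
          + ((p.2.2.val : ℤ) - (p'.2.2.val : ℤ) : ℤ)*zeta 8^2 + ((0:ℤ):ℂ)*zeta 8^3 := by
      push_cast
      rw [ofC_coe, ofC_coe]
      push_cast
      ring
    rw [hex] at hco
    obtain ⟨e1, e2, e3, e4⟩ := coords_unique hco.symm
    have v1 := p.1.val_lt
    have v2 := p.2.1.val_lt
    have v3 := p.2.2.val_lt
    have v1' := p'.1.val_lt
    have v2' := p'.2.1.val_lt
    have v3' := p'.2.2.val_lt
    have : p.1.val = p'.1.val ∧ p.2.1.val = p'.2.1.val ∧ p.2.2.val = p'.2.2.val := by omega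
    obtain ⟨w1, w2, w3⟩ := this
    exact Prod.ext (ZMod.val_injective _ w1) (Prod.ext (ZMod.val_injective _ w2)
      (ZMod.val_injective _ w3))
  have := Nat.card_eq_of_bijective χ ⟨hinj, hsurj⟩
  rw [← this]
  simp [Nat.card_prod]

end
noncomputable def piR : ↥(Rn 8) := ofC 1 (-1) 0 0

lemma piR_coe : ((piR : ↥(Rn 8)) : ℂ) = 1 - zeta 8 := by
  rw [piR, ofC_coe]; push_cast; ring

lemma coe_two : ((2 : ↥(Rn 8)) : ℂ) = 2 := by norm_cast
lemma coe_eight : ((8 : ↥(Rn 8)) : ℂ) = 8 := by norm_cast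

lemma decompR (r : ↥(Rn 8)) : ∃ (n : ℤ) (s : ↥(Rn 8)), r = (n : ↥(Rn 8)) + piR * s := by
  obtain ⟨a,b,c,d, hv⟩ := (mem_Rn8_iff (r:ℂ)).mp r.2
  refine ⟨a+b+c+d, ofC (-(b+c+d)) (-(c+d)) (-d) 0, Subtype.ext ?_⟩
  push_cast
  rw [hv, piR_coe, ofC_coe]
  push_cast
  ring

section
variable (q : ↥(Rn 8)) (hq : q = 1 + zetaR 8 + zetaR 8 ^ 2 + zetaR 8 ^ 3)
include hq

lemma pi_mul_q : piR * q = 2 := by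
  apply Subtype.ext
  push_cast
  rw [piR_coe, q_coe q hq, coe_two]
  linear_combination (-1 : ℂ) * zeta8_pow4

lemma q_eq_pi3 : q = ofC 0 (-2) (-3) (-2) * piR ^ 3 := by
  apply Subtype.ext
  push_cast
  rw [piR_coe, q_coe q hq, ofC_coe]
  push_cast
  linear_combination ((1 : ℂ) + 3*zeta 8 - 2*zeta 8^2) * zeta8_pow4

omit hq in
lemma pi12_eq : (piR : ↥(Rn 8)) ^ 12 = 8 * ofC 0 70 (-99) 70 := by
  apply Subtype.ext
  push_cast
  rw [piR_coe, ofC_coe, coe_eight]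
  push_cast
  linear_combination ((1:ℂ) - 572*zeta 8 + 858*zeta 8^2 - 780*zeta 8^3 + 494*zeta 8^4
    - 220*zeta 8^5 + 66*zeta 8^6 - 12*zeta 8^7 + zeta 8^8) * zeta8_pow4

end
lemma chain_lemma (A : Type) [CommRing A] [Finite A] (hcard : Nat.card A = 8)
    (π qb : A) (h2A : (2:A) = π * qb) (hπ12 : π^12 = 0)
    (hdec : ∀ c : A, ∃ (n : ℤ) (s : A), c = (n : A) + π * s) :
    π ^ 3 = 0 := by
  classical
  set M : ℕ → AddSubgroup A :=
    fun k => AddMonoidHom.range (AddMonoidHom.mulLeft (π ^ k)) with hM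
  have memM : ∀ (k : ℕ) (x : A), x ∈ M k ↔ ∃ c, π ^ k * c = x := by
    intro k x
    rw [hM, AddMonoidHom.mem_range]
    exact exists_congr fun c => by rw [AddMonoidHom.coe_mulLeft]
  have hMle : ∀ k, M (k+1) ≤ M k := by
    intro k x hx
    obtain ⟨c, rfl⟩ := (memM (k+1) x).mp hx
    exact (memM k _).mpr ⟨π * c, by ring⟩
  have hMmap : ∀ k, M (k+1) = AddSubgroup.map (AddMonoidHom.mulLeft π) (M k) := by
    intro k
    ext x
    rw [memM, AddSubgroup.mem_map]
    constructor
    · rintro ⟨c, rfl⟩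
      exact ⟨π^k * c, (memM k _).mpr ⟨c, rfl⟩, by rw [AddMonoidHom.coe_mulLeft]; ring⟩
    · rintro ⟨y, hy, rfl⟩
      obtain ⟨c, rfl⟩ := (memM k y).mp hy
      exact ⟨c, by rw [AddMonoidHom.coe_mulLeft]; ring⟩
  have hstag : ∀ k j, M k = M (k+1) → M (k+j) = M k := by
    intro k j h
    induction j with
    | zero => rfl
    | succ j ih =>
      rw [show k+(j+1) = (k+j)+1 by omega, hMmap, ih, ← hMmap, ← h]
  have hM12 : M 12 = ⊥ := by
    rw [eq_bot_iff]
    intro x hx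
    obtain ⟨c, rfl⟩ := (memM 12 x).mp hx
    rw [hπ12]
    simp
  have hM0 : Nat.card (M 0) = 8 := by
    have htop : M 0 = ⊤ := by
      rw [eq_top_iff]
      intro x _
      exact (memM 0 x).mpr ⟨x, by ring⟩
    rw [htop, ← hcard]
    exact Nat.card_congr AddSubgroup.topEquiv.toEquiv
  have hstep : ∀ k, Nat.card (M k) ≤ 2 * Nat.card (M (k+1)) := by
    intro k
    have hmem1 : ∀ (e : ZMod 2) (y : M (k+1)),
        ((e.val : ℤ) : A) * π^k + (y : A) ∈ M k := by
      intro e y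
      exact add_mem ((memM k _).mpr ⟨((e.val : ℤ) : A), by ring⟩) (hMle k y.2)
    set f : ZMod 2 × M (k+1) → M k :=
      fun p => ⟨((p.1.val : ℤ) : A) * π^k + p.2, hmem1 p.1 p.2⟩ with hf
    have hsurj : Function.Surjective f := by
      rintro ⟨x, hx⟩
      obtain ⟨c, hc⟩ := (memM k x).mp hx
      obtain ⟨n, s, hr⟩ := hdec c
      obtain ⟨t, ht⟩ := zmod2_val_sub n
      refine ⟨⟨(n : ZMod 2), ⟨π^(k+1) * ((((-t : ℤ)) : A) * qb + s),
        (memM (k+1) _).mpr ⟨_, rfl⟩⟩⟩, ?_⟩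
      apply Subtype.ext
      show ((((n : ZMod 2)).val : ℤ) : A) * π^k + _ = x
      have hval : ((((n : ZMod 2)).val : ℤ) : A) = ((n : ℤ) : A) + 2 * ((t : ℤ) : A) := by
        have hv2 : (((n : ZMod 2)).val : ℤ) = n + 2*t := by omega
        rw [hv2]
        push_cast
        ring
      rw [hval, ← hc, hr]
      push_cast
      linear_combination (((t : ℤ) : A) * π^k) * h2A
    have h1 : Nat.card (M k) ≤ Nat.card (ZMod 2 × M (k+1)) :=
      Nat.card_le_card_of_surjective f hsurj
    rwa [Nat.card_prod, Nat.card_zmod] at h1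
  have hdvd : ∀ k, Nat.card (M (k+1)) ∣ Nat.card (M k) :=
    fun k => AddSubgroup.card_dvd_of_le (hMle k)
  have hpos : ∀ k, 0 < Nat.card (M k) := fun k => Nat.card_pos
  have heqcard : ∀ k, Nat.card (M (k+1)) = Nat.card (M k) → M (k+1) = M k := by
    intro k h
    apply SetLike.coe_injective
    apply Set.eq_of_subset_of_ncard_le (hMle k) _ (Set.toFinite _)
    rw [← Nat.card_coe_set_eq, ← Nat.card_coe_set_eq]
    simp only [SetLike.coe_sort_coe]
    omega
  have hhalf : ∀ k, k ≤ 11 → 1 < Nat.card (M k) →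
      Nat.card (M (k+1)) ≠ Nat.card (M k) := by
    intro k hk hcard2 heq
    have h1 : M k = M (k+1) := (heqcard k heq).symm
    have h2 : M (k + (12 - k)) = M k := hstag k (12-k) h1
    rw [show k + (12 - k) = 12 by omega, hM12] at h2
    rw [← h2] at hcard2
    simp at hcard2
  have hn1 : Nat.card (M 1) = 4 := by
    have d0 := hdvd 0
    have s0 := hstep 0
    have hne := hhalf 0 (by omega) (by omega)
    have hle8 : Nat.card (M 1) ≤ 8 := by
      rw [← hM0]; exact Nat.le_of_dvd (by omega) d0
    have hp := hpos 1
    rw [hM0] at d0 s0 hne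
    interval_cases h : Nat.card (M 1) <;> omega
  have hn2 : Nat.card (M 2) = 2 := by
    have d1 := hdvd 1
    have s1 := hstep 1
    have hne := hhalf 1 (by omega) (by omega)
    have hle : Nat.card (M 2) ≤ 4 := by
      rw [← hn1]; exact Nat.le_of_dvd (by omega) d1
    have hp := hpos 2
    rw [hn1] at d1 s1 hne
    interval_cases h : Nat.card (M 2) <;> omega
  have hn3 : Nat.card (M 3) = 1 := by
    have d2 := hdvd 2
    have s2 := hstep 2
    have hne := hhalf 2 (by omega) (by omega)
    have hle : Nat.card (M 3) ≤ 2 := by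
      rw [← hn2]; exact Nat.le_of_dvd (by omega) d2
    have hp := hpos 3
    rw [hn2] at d2 s2 hne
    interval_cases h : Nat.card (M 3) <;> omega
  have hM3 : M 3 = ⊥ := AddSubgroup.card_eq_one.mp hn3
  have hmem : π^3 ∈ M 3 := (memM 3 _).mpr ⟨1, mul_one _⟩
  rw [hM3] at hmem
  simpa using hmem
section
variable (q : ↥(Rn 8)) (hq : q = 1 + zetaR 8 + zetaR 8 ^ 2 + zetaR 8 ^ 3)
  (I : Ideal ↥(Rn 8)) (hI : I = Ideal.span {q})
include hq hI
set_option linter.unusedSectionVars false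

set_option maxHeartbeats 1000000 in
set_option synthInstance.maxHeartbeats 400000 in
lemma unique_ideal (J : Ideal ↥(Rn 8)) (hJ : Nat.card (↥(Rn 8) ⧸ J) = 8) : J = I := by
  classical
  have hfinA : Finite (↥(Rn 8) ⧸ J) := Nat.finite_of_card_ne_zero (by rw [hJ]; omega)
  have h8 : (8 : ↥(Rn 8) ⧸ J) = 0 := by
    have h1 : Nat.card (↥(Rn 8) ⧸ J) • (1 : ↥(Rn 8) ⧸ J) = 0 := card_nsmul_eq_zero'
    rw [hJ] at h1
    rw [show (8 : ↥(Rn 8) ⧸ J) = (8:ℕ) • (1 : ↥(Rn 8) ⧸ J) by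
      rw [nsmul_eq_mul, mul_one]; norm_num]
    exact h1
  have h2A : (2 : ↥(Rn 8) ⧸ J) = Ideal.Quotient.mk J piR * Ideal.Quotient.mk J q := by
    rw [← map_mul, pi_mul_q q hq, map_ofNat]
  have hπ12 : (Ideal.Quotient.mk J piR) ^ 12 = 0 := by
    rw [← map_pow, pi12_eq, map_mul, map_ofNat, h8, zero_mul]
  have hdec : ∀ c : ↥(Rn 8) ⧸ J, ∃ (n : ℤ) (s : ↥(Rn 8) ⧸ J),
      c = (n : ↥(Rn 8) ⧸ J) + Ideal.Quotient.mk J piR * s := by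
    intro c
    obtain ⟨r, rfl⟩ := Ideal.Quotient.mk_surjective c
    obtain ⟨n, s, hr⟩ := decompR r
    refine ⟨n, Ideal.Quotient.mk J s, ?_⟩
    rw [hr]
    simp only [map_add, map_mul, map_intCast]
  have hπ3 : (Ideal.Quotient.mk J piR) ^ 3 = 0 :=
    chain_lemma _ hJ _ _ h2A hπ12 hdec
  have hqJ : q ∈ J := by
    rw [← Ideal.Quotient.eq_zero_iff_mem]
    rw [q_eq_pi3 q hq, map_mul, map_pow, hπ3, mul_zero]
  have hIJ : I ≤ J := by
    rw [hI, Ideal.span_le]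
    simpa using hqJ
  have hfinI : Finite (↥(Rn 8) ⧸ I) :=
    Nat.finite_of_card_ne_zero (by rw [card_RI q hq I hI]; omega)
  have hsurjφ : Function.Surjective (Ideal.Quotient.factor hIJ) := by
    intro x
    obtain ⟨r, rfl⟩ := Ideal.Quotient.mk_surjective x
    exact ⟨Ideal.Quotient.mk I r, Ideal.Quotient.factor_mk _ _⟩
  have hinjφ : Function.Injective (Ideal.Quotient.factor hIJ) :=
    ((Nat.bijective_iff_surjective_and_card _).mpr
      ⟨hsurjφ, by rw [card_RI q hq I hI, hJ]⟩).1
  refine le_antisymm ?_ hIJ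
  intro x hx
  have h0 : (Ideal.Quotient.factor hIJ) (Ideal.Quotient.mk I x)
      = (Ideal.Quotient.factor hIJ) 0 := by
    rw [map_zero, Ideal.Quotient.factor_mk, Ideal.Quotient.eq_zero_iff_mem]
    exact hx
  have := hinjφ h0
  rwa [← Ideal.Quotient.eq_zero_iff_mem]

end
lemma zeta_mem : zeta 8 ∈ Rn 8 := Subring.subset_closure rfl

section
variable (q : ↥(Rn 8)) (hq : q = 1 + zetaR 8 + zetaR 8 ^ 2 + zetaR 8 ^ 3)
  (I : Ideal ↥(Rn 8)) (hI : I = Ideal.span {q})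
include hq hI
set_option linter.unusedSectionVars false

lemma not_in_coords (a b c d : ℤ) (hbad : ¬(2 ∣ b - a ∧ 2 ∣ c - b ∧ 2 ∣ d - c)) :
    ¬ InIdeal 8 I ((a:ℂ) + b*zeta 8 + c*zeta 8^2 + d*zeta 8^3) := by
  intro h
  obtain ⟨a',b',c',d', hco, h1, h2, h3⟩ := (inIdeal_iff q hq I hI _).mp h
  obtain ⟨e1,e2,e3,e4⟩ := coords_unique hco
  exact hbad ⟨by omega, by omega, by omega⟩

lemma perfect : IsPerfectColouring 8 I := by
  intro g hg hgR
  have memg : ∀ z ∈ Rn 8, g z ∈ Rn 8 := by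
    intro z hz
    have himg : g z ∈ g '' (Rn 8 : Set ℂ) := ⟨z, hz, rfl⟩
    rwa [hgR] at himg
  obtain ⟨a, b, habs, hform | hform⟩ := hg
  · have hb : b ∈ Rn 8 := by
      have := memg 0 (zero_mem _)
      rwa [hform 0, mul_zero, zero_add] at this
    have hab : a + b ∈ Rn 8 := by
      have := memg 1 (one_mem _)
      rwa [hform 1, mul_one] at this
    have haR : a ∈ Rn 8 := by
      have := sub_mem hab hb
      simpa using this
    intro x y hx hy
    rw [show g x - g y = a * (x - y) by rw [hform x, hform y]; ring]
    exact inIdeal_mul_iff q hq I hI haR habs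
  · have hb : b ∈ Rn 8 := by
      have := memg 0 (zero_mem _)
      rwa [hform 0, map_zero, mul_zero, zero_add] at this
    have hab : a + b ∈ Rn 8 := by
      have := memg 1 (one_mem _)
      rwa [hform 1, map_one, mul_one] at this
    have haR : a ∈ Rn 8 := by
      have := sub_mem hab hb
      simpa using this
    intro x y hx hy
    rw [show g x - g y = a * ((starRingEnd ℂ) (x - y)) by
      rw [hform x, hform y, map_sub]; ring]
    rw [inIdeal_conj_iff q hq I hI (x - y)]
    exact inIdeal_mul_iff q hq I hI haR habs

lemma classification (g : ℂ → ℂ) (hg : IsIsometry g)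
    (hgR : g '' (Rn 8 : Set ℂ) = (Rn 8 : Set ℂ)) :
    (∀ x ∈ (Rn 8 : Set ℂ), InIdeal 8 I (g x - x)) ↔
      ∃ t : ℂ, InIdeal 8 I t ∧
        ((∀ z : ℂ, g z = z + t) ∨ (∀ z : ℂ, g z = -z + t)) := by
  have memg : ∀ z ∈ Rn 8, g z ∈ Rn 8 := by
    intro z hz
    have himg : g z ∈ g '' (Rn 8 : Set ℂ) := ⟨z, hz, rfl⟩
    rwa [hgR] at himg
  constructor
  · intro H
    obtain ⟨a, b, habs, hform | hform⟩ := hg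
    · -- rotation case
      have h0 : InIdeal 8 I b := by
        have := H 0 (zero_mem _)
        rwa [hform 0, mul_zero, zero_add, sub_zero] at this
      have ha1 : InIdeal 8 I (a - 1) := by
        have h1 := H 1 (one_mem _)
        rw [hform 1, mul_one] at h1
        have := inIdeal_sub q hq I hI h1 h0
        rwa [show a + b - 1 - b = a - 1 by ring] at this
      have hb : b ∈ Rn 8 := by
        have := memg 0 (zero_mem _)
        rwa [hform 0, mul_zero, zero_add] at this
      have haR : a ∈ Rn 8 := by
        have h1 := memg 1 (one_mem _)
        rw [hform 1, mul_one] at h1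
        have := sub_mem h1 hb
        simpa using this
      rcases abs_one_classify haR habs with h|h|h|h|h|h|h|h
      · exact ⟨b, h0, Or.inl (fun z => by rw [hform z, h, one_mul])⟩
      · exact ⟨b, h0, Or.inr (fun z => by rw [hform z, h]; ring)⟩
      · exfalso
        rw [h] at ha1
        exact not_in_coords q hq I hI (-1) 1 0 0 (by omega)
          (by rw [show ((-1:ℤ):ℂ) + (1:ℤ)*zeta 8 + (0:ℤ)*zeta 8^2 + (0:ℤ)*zeta 8^3
              = zeta 8 - 1 by push_cast; ring]; exact ha1)
      · exfalso
        rw [h] at ha1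
        exact not_in_coords q hq I hI (-1) (-1) 0 0 (by omega)
          (by rw [show ((-1:ℤ):ℂ) + (-1:ℤ)*zeta 8 + (0:ℤ)*zeta 8^2 + (0:ℤ)*zeta 8^3
              = -zeta 8 - 1 by push_cast; ring]; exact ha1)
      · exfalso
        rw [h] at ha1
        exact not_in_coords q hq I hI (-1) 0 1 0 (by omega)
          (by rw [show ((-1:ℤ):ℂ) + (0:ℤ)*zeta 8 + (1:ℤ)*zeta 8^2 + (0:ℤ)*zeta 8^3
              = zeta 8^2 - 1 by push_cast; ring]; exact ha1)
      · exfalso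
        rw [h] at ha1
        exact not_in_coords q hq I hI (-1) 0 (-1) 0 (by omega)
          (by rw [show ((-1:ℤ):ℂ) + (0:ℤ)*zeta 8 + (-1:ℤ)*zeta 8^2 + (0:ℤ)*zeta 8^3
              = -zeta 8^2 - 1 by push_cast; ring]; exact ha1)
      · exfalso
        rw [h] at ha1
        exact not_in_coords q hq I hI (-1) 0 0 1 (by omega)
          (by rw [show ((-1:ℤ):ℂ) + (0:ℤ)*zeta 8 + (0:ℤ)*zeta 8^2 + (1:ℤ)*zeta 8^3
              = zeta 8^3 - 1 by push_cast; ring]; exact ha1)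
      · exfalso
        rw [h] at ha1
        exact not_in_coords q hq I hI (-1) 0 0 (-1) (by omega)
          (by rw [show ((-1:ℤ):ℂ) + (0:ℤ)*zeta 8 + (0:ℤ)*zeta 8^2 + (-1:ℤ)*zeta 8^3
              = -zeta 8^3 - 1 by push_cast; ring]; exact ha1)
    · -- reflection case : always contradiction
      exfalso
      have h0 : InIdeal 8 I b := by
        have := H 0 (zero_mem _)
        rwa [hform 0, map_zero, mul_zero, zero_add, sub_zero] at this
      have ha1 : InIdeal 8 I (a - 1) := by
        have h1 := H 1 (one_mem _)
        rw [hform 1, map_one, mul_one] at h1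
        have := inIdeal_sub q hq I hI h1 h0
        rwa [show a + b - 1 - b = a - 1 by ring] at this
      have hb : b ∈ Rn 8 := by
        have := memg 0 (zero_mem _)
        rwa [hform 0, map_zero, mul_zero, zero_add] at this
      have haR : a ∈ Rn 8 := by
        have h1 := memg 1 (one_mem _)
        rw [hform 1, map_one, mul_one] at h1
        have := sub_mem h1 hb
        simpa using this
      have hz : InIdeal 8 I (a * (starRingEnd ℂ) (zeta 8) - zeta 8) := by
        have h1 := H (zeta 8) zeta_mem
        rw [hform (zeta 8)] at h1
        have := inIdeal_sub q hq I hI h1 h0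
        rwa [show a * (starRingEnd ℂ) (zeta 8) + b - zeta 8 - b
          = a * (starRingEnd ℂ) (zeta 8) - zeta 8 by ring] at this
      rw [conj_zeta] at hz
      rcases abs_one_classify haR habs with h|h|h|h|h|h|h|h
      · rw [h, one_mul] at hz
        exact not_in_coords q hq I hI 0 (-1) 0 (-1) (by omega)
          (by rw [show ((0:ℤ):ℂ) + (-1:ℤ)*zeta 8 + (0:ℤ)*zeta 8^2 + (-1:ℤ)*zeta 8^3
              = -zeta 8^3 - zeta 8 by push_cast; ring]; exact hz)
      · rw [h] at hz
        rw [show (-1 : ℂ) * -zeta 8^3 - zeta 8 = zeta 8^3 - zeta 8 by ring] at hz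
        exact not_in_coords q hq I hI 0 (-1) 0 1 (by omega)
          (by rw [show ((0:ℤ):ℂ) + (-1:ℤ)*zeta 8 + (0:ℤ)*zeta 8^2 + (1:ℤ)*zeta 8^3
              = zeta 8^3 - zeta 8 by push_cast; ring]; exact hz)
      all_goals (rw [h] at ha1)
      · exact not_in_coords q hq I hI (-1) 1 0 0 (by omega)
          (by rw [show ((-1:ℤ):ℂ) + (1:ℤ)*zeta 8 + (0:ℤ)*zeta 8^2 + (0:ℤ)*zeta 8^3
              = zeta 8 - 1 by push_cast; ring]; exact ha1)
      · exact not_in_coords q hq I hI (-1) (-1) 0 0 (by omega)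
          (by rw [show ((-1:ℤ):ℂ) + (-1:ℤ)*zeta 8 + (0:ℤ)*zeta 8^2 + (0:ℤ)*zeta 8^3
              = -zeta 8 - 1 by push_cast; ring]; exact ha1)
      · exact not_in_coords q hq I hI (-1) 0 1 0 (by omega)
          (by rw [show ((-1:ℤ):ℂ) + (0:ℤ)*zeta 8 + (1:ℤ)*zeta 8^2 + (0:ℤ)*zeta 8^3
              = zeta 8^2 - 1 by push_cast; ring]; exact ha1)
      · exact not_in_coords q hq I hI (-1) 0 (-1) 0 (by omega)
          (by rw [show ((-1:ℤ):ℂ) + (0:ℤ)*zeta 8 + (-1:ℤ)*zeta 8^2 + (0:ℤ)*zeta 8^3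
              = -zeta 8^2 - 1 by push_cast; ring]; exact ha1)
      · exact not_in_coords q hq I hI (-1) 0 0 1 (by omega)
          (by rw [show ((-1:ℤ):ℂ) + (0:ℤ)*zeta 8 + (0:ℤ)*zeta 8^2 + (1:ℤ)*zeta 8^3
              = zeta 8^3 - 1 by push_cast; ring]; exact ha1)
      · exact not_in_coords q hq I hI (-1) 0 0 (-1) (by omega)
          (by rw [show ((-1:ℤ):ℂ) + (0:ℤ)*zeta 8 + (0:ℤ)*zeta 8^2 + (-1:ℤ)*zeta 8^3
              = -zeta 8^3 - 1 by push_cast; ring]; exact ha1)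
  · rintro ⟨t, ht, hform | hform⟩
    · intro x hx
      rw [hform x, add_sub_cancel_left]
      exact ht
    · intro x hx
      rw [hform x, show -x + t - x = t - x * 2 by ring]
      exact inIdeal_sub q hq I hI ht
        (inIdeal_mul q hq I hI hx ⟨2, two_mem q hq I hI, coe_two⟩)

end

/-- for `n = 8`, `q = 1 + ζ + ζ² + ζ³` and `I = qR`: (i) `card(R/I) = 8`;
(ii) `I` is the unique ideal of index `8`; (iii) `conj q ∈ I` and the colouring is
perfect; (iv) `2 ∈ I`; (v) `1 - ζ² ∉ I`; (vi) `ζ + ζ³ ∉ I`; consequently the colour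
preserving isometries are exactly `z ↦ z + t` and `z ↦ -z + t` with `t ∈ I`, i.e.
`K = T_{(q)} ⋊ C₂`. -/
theorem stmt19 (q : ↥(Rn 8)) (hqdef : q = 1 + zetaR 8 + zetaR 8 ^ 2 + zetaR 8 ^ 3)
    (I : Ideal ↥(Rn 8)) (hIdef : I = Ideal.span {q}) :
    Nat.card (↥(Rn 8) ⧸ I) = 8 ∧
    (∀ J : Ideal ↥(Rn 8), Nat.card (↥(Rn 8) ⧸ J) = 8 → J = I) ∧
    (InIdeal 8 I ((starRingEnd ℂ) (q : ℂ)) ∧ IsPerfectColouring 8 I) ∧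
    (2 : ↥(Rn 8)) ∈ I ∧
    (1 - zetaR 8 ^ 2) ∉ I ∧
    (zetaR 8 + zetaR 8 ^ 3) ∉ I ∧
    (∀ g : ℂ → ℂ, IsIsometry g → g '' (Rn 8 : Set ℂ) = (Rn 8 : Set ℂ) →
      ((∀ x ∈ (Rn 8 : Set ℂ), InIdeal 8 I (g x - x)) ↔
        ∃ t : ℂ, InIdeal 8 I t ∧
          ((∀ z : ℂ, g z = z + t) ∨ (∀ z : ℂ, g z = -z + t)))) := by
  exact ⟨card_RI q hqdef I hIdef, fun J hJ => unique_ideal q hqdef I hIdef J hJ,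
    ⟨conjq_mem q hqdef I hIdef, perfect q hqdef I hIdef⟩, two_mem q hqdef I hIdef,
    not_mem_v q hqdef I hIdef, not_mem_vi q hqdef I hIdef,
    fun g hg hgR => classification q hqdef I hIdef g hg hgR⟩
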